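/- Let F be a field of characteristic zero and f : Z → F a function satisfying (k - l)·f(k + l) = (k + l)·(f(k) - f(l)) for all integers k, l. Then there exist constants a, b ∈ F such that f(k) = a·k + b·k² for all k ∈ Z. -/
import Mathlib

lemma aux_stmt_0 {F : Type*} [Field F] [CharZero F] (g : ℤ → F)
    (hg : ∀ k l : ℤ, ((k - l : ℤ) : F) * g (k + l) = ((k + l : ℤ) : F) * (g k - g l))
    (h1 : g 1 = 0) (h2 : g 2 = 0) : ∀ n : ℕ, g n = 0 := by
  intro n
  induction n using Nat.strong_induction_on with
  | _ n ih =>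
    match n with
    | 0 =>
      have h : g 0 = 0 := by have h := hg 1 (-1); norm_num at h; exact h
      exact_mod_cast h
    | 1 => exact_mod_cast h1
    | 2 => exact_mod_cast h2
    | (m+3) =>
      have hm : g ((m:ℤ)+2) = 0 := by exact_mod_cast ih (m+2) (by omega)
      have hne : (((m:ℤ) + 2 - 1 : ℤ) : F) ≠ 0 := by
        intro h
        have : ((m:ℤ) + 2 - 1 : ℤ) = 0 := by exact_mod_cast h
        omega
      have h := hg ((m:ℤ)+2) 1
      rw [h1, hm] at h
      have h0 : (((m:ℤ) + 2 - 1 : ℤ) : F) * g ((m:ℤ)+2+1) = 0 := by rw [h]; ring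
      have key : g ((m:ℤ)+2+1) = 0 := (mul_eq_zero.mp h0).resolve_left hne
      have hcast : ((m:ℤ)+2+1) = ((m+3 : ℕ) : ℤ) := by push_cast; ring
      rwa [hcast] at key

theorem stmt_0 {F : Type*} [Field F] [CharZero F] (f : ℤ → F)
    (hf : ∀ k l : ℤ, ((k - l : ℤ) : F) * f (k + l) = ((k + l : ℤ) : F) * (f k - f l)) :
    ∃ a b : F, ∀ k : ℤ, f k = a * (k : F) + b * (k : F) ^ 2 := by
  set a : F := 2 * f 1 - f 2 / 2 with ha
  set b : F := f 2 / 2 - f 1 with hb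
  refine ⟨a, b, ?_⟩
  set g : ℤ → F := fun k => f k - (a * (k : F) + b * (k : F) ^ 2) with hgdef
  have hg : ∀ k l : ℤ, ((k - l : ℤ) : F) * g (k + l) = ((k + l : ℤ) : F) * (g k - g l) := by
    intro k l
    have h := hf k l
    simp only [hgdef]
    push_cast at h ⊢
    linear_combination h
  have h1 : g 1 = 0 := by simp only [hgdef]; push_cast; rw [ha, hb]; ring
  have h2 : g 2 = 0 := by simp only [hgdef]; push_cast; rw [ha, hb]; ring
  have hpos := aux_stmt_0 g hg h1 h2
  have hm1 : g (-1) = 0 := by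
    have h := hg 2 (-1)
    norm_num [h1, h2] at h
    exact h
  have h3 : g 3 = 0 := by exact_mod_cast hpos 3
  have hm2 : g (-2) = 0 := by
    have h := hg 3 (-2)
    norm_num [h1, h3] at h
    exact h
  set h : ℤ → F := fun k => g (-k) with hhdef
  have hh : ∀ k l : ℤ, ((k - l : ℤ) : F) * h (k + l) = ((k + l : ℤ) : F) * (h k - h l) := by
    intro k l
    have h' := hg (-k) (-l)
    simp only [hhdef]
    have hx : -k + -l = -(k+l) := by ring
    rw [hx] at h'
    push_cast at h' ⊢
    linear_combination -h'
  have hneg := aux_stmt_0 h hh (by simpa [hhdef] using hm1) (by simpa [hhdef] using hm2)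
  intro k
  have hgk : g k = 0 := by
    rcases le_or_gt 0 k with hk | hk
    · have := hpos k.toNat
      rwa [Int.toNat_of_nonneg hk] at this
    · have := hneg (-k).toNat
      rw [Int.toNat_of_nonneg (by omega)] at this
      simpa [hhdef] using this
  simp only [hgdef] at hgk
  linear_combination hgk
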